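/- Let G be a perfect group and G̃ the central extension of G by an abelian group A defined by a 2-cocycle h : G × G → A. If h is strongly non-split, i.e. for every proper subgroup A' < A the induced 2-cocycle G × G → A/A' is non-split, then G̃ is perfect. -/

import Mathlib

/-- The central extension of `G` by `A` defined by a 2-cocycle `h` (trivial action):
the group structure on `A × G` with multiplication
`(a₁,g₁)*(a₂,g₂) = (a₁+a₂+h g₁ g₂, g₁g₂)`. -/
def centExtGroup {G A : Type*} [Group G] [AddCommGroup A] (h : G → G → A)
    (hcoc : ∀ g₁ g₂ g₃ : G, h g₁ g₂ + h (g₁ * g₂) g₃ = h g₁ (g₂ * g₃) + h g₂ g₃)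
    (hl : ∀ g : G, h 1 g = 0) (hr : ∀ g : G, h g 1 = 0) : Group (A × G) :=
  letI : Mul (A × G) := ⟨fun p q => (p.1 + q.1 + h p.2 q.2, p.2 * q.2)⟩
  letI : One (A × G) := ⟨((0 : A), (1 : G))⟩
  letI : Inv (A × G) := ⟨fun p => (-p.1 - h p.2⁻¹ p.2, p.2⁻¹)⟩
  Group.ofLeftAxioms
    (fun p q r => by
      refine Prod.ext ?_ (mul_assoc p.2 q.2 r.2)
      show p.1 + q.1 + h p.2 q.2 + r.1 + h (p.2 * q.2) r.2
          = p.1 + (q.1 + r.1 + h q.2 r.2) + h p.2 (q.2 * r.2)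
      have key := hcoc p.2 q.2 r.2
      calc p.1 + q.1 + h p.2 q.2 + r.1 + h (p.2 * q.2) r.2
          = p.1 + q.1 + r.1 + (h p.2 q.2 + h (p.2 * q.2) r.2) := by abel
        _ = p.1 + q.1 + r.1 + (h p.2 (q.2 * r.2) + h q.2 r.2) := by rw [key]
        _ = p.1 + (q.1 + r.1 + h q.2 r.2) + h p.2 (q.2 * r.2) := by abel)
    (fun p => by
      refine Prod.ext ?_ (one_mul p.2)
      show 0 + p.1 + h 1 p.2 = p.1
      rw [hl]; abel)
    (fun p => by
      refine Prod.ext ?_ (inv_mul_cancel p.2)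
      show -p.1 - h p.2⁻¹ p.2 + p.1 + h p.2⁻¹ p.2 = 0
      abel)


/-- If `G` is perfect and the 2-cocycle `h : G × G → A` is strongly
non-split (for every proper subgroup `A' < A` the induced 2-cocycle with values in
`A/A'` is non-split), then the central extension `G̃` is perfect. -/
theorem statement7 {G A : Type*} [Group G] [AddCommGroup A]
    (hG : commutator G = ⊤)
    (h : G → G → A)
    (hcoc : ∀ g₁ g₂ g₃ : G, h g₁ g₂ + h (g₁ * g₂) g₃ = h g₁ (g₂ * g₃) + h g₂ g₃)
    (hl : ∀ g : G, h 1 g = 0) (hr : ∀ g : G, h g 1 = 0)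
    (hsns : ∀ A' : AddSubgroup A, A' ≠ ⊤ →
      ¬ ∃ f : G → A ⧸ A', f 1 = 0 ∧
        ∀ x y : G, (QuotientAddGroup.mk (h x y) : A ⧸ A') = f x + f y - f (x * y)) :
    letI : Group (A × G) := centExtGroup h hcoc hl hr
    commutator (A × G) = ⊤ := by
  letI : Group (A × G) := centExtGroup h hcoc hl hr
  show commutator (A × G) = ⊤
  set H := commutator (A × G) with hH
  -- symmetry lemma for inverses
  have hsym : ∀ g : G, h g g⁻¹ = h g⁻¹ g := by
    intro g
    have := hcoc g g⁻¹ g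
    rw [mul_inv_cancel, inv_mul_cancel, hl, hr] at this
    simpa using this
  -- the projection homomorphism
  let π : (A × G) →* G :=
    { toFun := Prod.snd, map_one' := rfl, map_mul' := fun p q => rfl }
  have hπsurj : Function.Surjective π := fun g => ⟨((0 : A), g), rfl⟩
  have hmap : Subgroup.map π H = ⊤ := by
    rw [hH, commutator_def, Subgroup.map_commutator,
      Subgroup.map_top_of_surjective π hπsurj, ← commutator_def, hG]
  have hsec : ∀ g : G, ∃ a : A, ((a, g) : A × G) ∈ H := by
    intro g
    have hg : g ∈ Subgroup.map π H := hmap ▸ Subgroup.mem_top g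
    obtain ⟨⟨a, b⟩, hp, hpg⟩ := hg
    exact ⟨a, by rwa [show g = b from hpg.symm]⟩
  -- the subgroup of A of elements (a,1) in H
  let A' : AddSubgroup A :=
    { carrier := {a | ((a, (1 : G)) : A × G) ∈ H}
      zero_mem' := Subgroup.one_mem H
      add_mem' := fun {a b} ha hb => by
        have hm := Subgroup.mul_mem H ha hb
        have e : ((a, (1 : G)) : A × G) * (b, 1) = (a + b, 1) :=
          Prod.ext (by show a + b + h 1 1 = a + b; rw [hl]; abel) (one_mul 1)
        rwa [e] at hm
      neg_mem' := fun {a} ha => by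
        have hm := Subgroup.inv_mem H ha
        have e : ((a, (1 : G)) : A × G)⁻¹ = (-a, 1) :=
          Prod.ext (by show -a - h 1⁻¹ 1 = -a; rw [inv_one, hl]; abel) inv_one
        rwa [e] at hm }
  have hA' : A' = ⊤ := by
    by_contra hne
    apply hsns A' hne
    choose s hs using hsec
    refine ⟨fun g => -(QuotientAddGroup.mk (s g)), ?_, ?_⟩
    · rw [neg_eq_zero, QuotientAddGroup.eq_zero_iff]
      exact hs 1
    · intro x y
      have key : ((s x + s y + h x y - s (x * y), (1 : G)) : A × G) ∈ H := by
        have hm := Subgroup.mul_mem H (Subgroup.mul_mem H (hs x) (hs y))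
          (Subgroup.inv_mem H (hs (x * y)))
        have e : ((s x, x) : A × G) * (s y, y) * ((s (x * y), x * y) : A × G)⁻¹
            = (s x + s y + h x y - s (x * y), 1) := by
          refine Prod.ext ?_ (mul_inv_cancel (x * y))
          show s x + s y + h x y + (-(s (x * y)) - h (x * y)⁻¹ (x * y))
              + h (x * y) (x * y)⁻¹ = s x + s y + h x y - s (x * y)
          rw [hsym]; abel
        rwa [e] at hm
      have h0 : (QuotientAddGroup.mk (s x + s y + h x y - s (x * y)) : A ⧸ A') = 0 :=
        (QuotientAddGroup.eq_zero_iff _).mpr key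
      simp only [QuotientAddGroup.mk_add, QuotientAddGroup.mk_sub] at h0
      refine eq_of_sub_eq_zero ?_
      rw [← h0]; simp only [neg_neg, sub_neg_eq_add]; abel
  rw [eq_top_iff]
  rintro ⟨a, g⟩ -
  obtain ⟨b, hb⟩ := hsec g
  have ha' : ((a - b, (1 : G)) : A × G) ∈ H := by
    have : a - b ∈ A' := hA' ▸ AddSubgroup.mem_top _
    exact this
  have e : ((a - b, (1 : G)) : A × G) * (b, g) = (a, g) :=
    Prod.ext (by show a - b + b + h 1 g = a; rw [hl]; abel) (one_mul g)
  exact e ▸ Subgroup.mul_mem H ha' hb
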